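/- SIC rule for select-of-store: model arrays over index type I (with decidable equality) and value type V as functions I → V. Let i, j : X × 𝕍 → I, e : X × 𝕍 → V, and arr : X × 𝕍 → (I → V) be terms, with SICs ti, tj, te, and tsel respectively for i, j, e, and the term fun (x,v) => arr (x,v) (j (x,v)), all w.r.t. X. Then Ψ v := (ti v ∧ tj v ∧ (∀ x, if i (x,v) = j (x,v) then True else False → True) ∧ ((∃ x, i (x,v) = j (x,v)) → te v) ∧ ((∃ x, i (x,v) ≠ j (x,v)) → tsel v)) ∨ (te v ∧ tsel v ∧ ∀ x, e (x,v) = arr (x,v) (j (x,v))) is a SIC for the term fun (x,v) => (Function.update (arr (x,v)) (i (x,v)) (e (x,v))) (j (x,v)) w.r.t. X. (Here, under ti ∧ tj, the condition i = j is independent of x, so the existentials coincide with universals.) -/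
import Mathlib


/-- SIC rule for select-of-store on arrays. -/
theorem sic_select_store_rule {X 𝕍 I V : Type*} [DecidableEq I]
    (i j : X × 𝕍 → I) (e : X × 𝕍 → V) (arr : X × 𝕍 → (I → V))
    (ti tj te tsel : 𝕍 → Prop)
    (hi : ∀ v, ti v → ∀ x y : X, i (x, v) = i (y, v))
    (hj : ∀ v, tj v → ∀ x y : X, j (x, v) = j (y, v))
    (he : ∀ v, te v → ∀ x y : X, e (x, v) = e (y, v))
    (hsel : ∀ v, tsel v → ∀ x y : X, arr (x, v) (j (x, v)) = arr (y, v) (j (y, v))) :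
    ∀ v, ((ti v ∧ tj v ∧
            (∀ x, if i (x, v) = j (x, v) then True else (False → True)) ∧
            ((∃ x, i (x, v) = j (x, v)) → te v) ∧
            ((∃ x, i (x, v) ≠ j (x, v)) → tsel v)) ∨
          (te v ∧ tsel v ∧ ∀ x, e (x, v) = arr (x, v) (j (x, v)))) →
      ∀ x y : X,
        (Function.update (arr (x, v)) (i (x, v)) (e (x, v))) (j (x, v)) =
        (Function.update (arr (y, v)) (i (y, v)) (e (y, v))) (j (y, v)) := by
  intro v h x y
  simp only [Function.update]
  rcases h with ⟨hti, htj, _, hee, hss⟩ | ⟨hte, hts, heq⟩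
  · have hij : i (x, v) = i (y, v) := hi v hti x y
    have hjj : j (x, v) = j (y, v) := hj v htj x y
    by_cases hc : j (x, v) = i (x, v)
    · have hc2 : j (y, v) = i (y, v) := by rw [← hij, ← hjj]; exact hc
      simp [hc, hc2]
      exact he v (hee ⟨x, hc.symm⟩) x y
    · have hc2 : ¬ j (y, v) = i (y, v) := by rw [← hij, ← hjj]; exact hc
      simp [hc, hc2]
      exact hsel v (hss ⟨x, fun h => hc h.symm⟩) x y
  · have hx : (Function.update (arr (x, v)) (i (x, v)) (e (x, v))) (j (x, v)) = arr (x, v) (j (x, v)) := by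
      by_cases hc : j (x, v) = i (x, v)
      · simp [Function.update, hc]
        rw [heq x, hc]
      · simp [Function.update, hc]
    have hy : (Function.update (arr (y, v)) (i (y, v)) (e (y, v))) (j (y, v)) = arr (y, v) (j (y, v)) := by
      by_cases hc : j (y, v) = i (y, v)
      · simp [Function.update, hc]
        rw [heq y, hc]
      · simp [Function.update, hc]
    simp only [Function.update] at hx hy
    rw [hx, hy]
    exact hsel v hts x y
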